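/- Let G be a finite group and H a subgroup. Then H is nilpotent and subnormal in G if and only if the normal closure of H in G is nilpotent. -/

import Mathlib

open Subgroup Pointwise


/-- `A` is a normal subgroup of `B` (for subgroups of an ambient group `G`). -/
def NormalIn {G : Type*} [Group G] (A B : Subgroup G) : Prop :=
  A ≤ B ∧ ∀ b ∈ B, ∀ a ∈ A, b * a * b⁻¹ ∈ A

/-- `H` is subnormal in `G`: there is a chain `H = H₀ ⊴ H₁ ⊴ ⋯ ⊴ Hₙ = G`. -/
def Subnormal {G : Type*} [Group G] (H : Subgroup G) : Prop :=
  ∃ (n : ℕ) (c : ℕ → Subgroup G), c 0 = H ∧ c n = ⊤ ∧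
    ∀ i < n, NormalIn (c i) (c (i + 1))

section Helpers

variable {G : Type*} [Group G]

lemma aux_nilp_of_le {K L : Subgroup G} (h : K ≤ L) (hL : Group.IsNilpotent L) :
    Group.IsNilpotent K := by
  haveI := hL
  exact nilpotent_of_mulEquiv (subgroupOfEquivOfLe h)

lemma aux_card_lt [Finite G] {K L : Subgroup G} (h : K < L) : Nat.card K < Nat.card L := by
  have h1 : (K : Set G) ⊂ L := SetLike.coe_ssubset_coe.mpr h
  have := Set.ncard_lt_ncard h1 (Set.toFinite _)
  rwa [← Nat.card_coe_set_eq, ← Nat.card_coe_set_eq] at this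

lemma aux_reach_top [Finite G] (hnc : NormalizerCondition G) (K : Subgroup G) :
    ∃ n, (fun K : Subgroup _ => normalizer (K : Set _))^[n] K = ⊤ := by
  have main : ∀ m (K : Subgroup G), Nat.card G - Nat.card K ≤ m →
      ∃ n, (fun K : Subgroup _ => normalizer (K : Set _))^[n] K = ⊤ := by
    intro m
    induction m with
    | zero =>
      intro K hK
      have hle : Nat.card K ≤ Nat.card G := card_le_card_group K
      exact ⟨0, K.eq_top_of_card_eq (by omega)⟩
    | succ m ih =>
      intro K hK
      by_cases h : K = ⊤
      · exact ⟨0, h⟩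
      · have h1 : K < normalizer (K : Set G) := hnc K (lt_top_iff_ne_top.mpr h)
        have h2 := aux_card_lt h1
        have h3 : Nat.card (normalizer (K : Set G)) ≤ Nat.card G := card_le_card_group _
        obtain ⟨n, hn⟩ := ih (normalizer (K : Set G)) (by omega)
        exact ⟨n + 1, by rwa [Function.iterate_succ_apply]⟩
  exact main (Nat.card G - Nat.card K) K le_rfl

lemma aux_subnormal_of_le_nilpotent_normal [Finite G] {H N : Subgroup G} (hHN : H ≤ N)
    [N.Normal] (hN : Group.IsNilpotent N) : Subnormal H := by
  haveI := hN
  have hnc : NormalizerCondition ↥N := normalizerCondition_of_isNilpotent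
  obtain ⟨n, hn⟩ := aux_reach_top hnc (H.subgroupOf N)
  refine ⟨n + 1, fun i => if i ≤ n then
      ((fun K : Subgroup _ => normalizer (K : Set _))^[i] (H.subgroupOf N)).map N.subtype else ⊤, ?_, ?_, ?_⟩
  · simp only [Nat.zero_le, if_pos, Function.iterate_zero, id_eq]
    rw [subgroupOf_map_subtype, inf_eq_left.mpr hHN]
  · simp
  · intro i hi
    rcases lt_or_eq_of_le (Nat.lt_succ_iff.mp hi) with hi' | hi'
    · -- i < n
      have e1 : (if i ≤ n then ((fun K : Subgroup _ => normalizer (K : Set _))^[i] (H.subgroupOf N)).map N.subtype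
          else ⊤) = ((fun K : Subgroup _ => normalizer (K : Set _))^[i] (H.subgroupOf N)).map N.subtype :=
        if_pos (le_of_lt hi')
      have e2 : (if i + 1 ≤ n then ((fun K : Subgroup _ => normalizer (K : Set _))^[i+1] (H.subgroupOf N)).map N.subtype
          else ⊤) = (normalizer (((fun K : Subgroup _ => normalizer (K : Set _))^[i] (H.subgroupOf N)) : Set _)).map N.subtype := by
        rw [if_pos (by omega : i + 1 ≤ n), Function.iterate_succ_apply']
      simp only [e1, e2]
      set A := (fun K : Subgroup _ => normalizer (K : Set _))^[i] (H.subgroupOf N)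
      constructor
      · exact (map_le_map_iff_of_injective N.subtype_injective).mpr A.le_normalizer
      · rintro b hb a ha
        obtain ⟨y, hy, rfl⟩ := hb
        obtain ⟨x, hx, rfl⟩ := ha
        refine ⟨y * x * y⁻¹, (mem_normalizer_iff.mp hy x).mp hx, by simp⟩
    · -- i = n
      subst hi'
      have e1 : (if i ≤ i then ((fun K : Subgroup _ => normalizer (K : Set _))^[i] (H.subgroupOf N)).map N.subtype
          else ⊤) = N := by
        rw [if_pos le_rfl, hn, ← MonoidHom.range_eq_map, N.range_subtype]
      have e2 : (if i + 1 ≤ i then ((fun K : Subgroup _ => normalizer (K : Set _))^[i+1] (H.subgroupOf N)).map N.subtype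
          else ⊤) = ⊤ := if_neg (by omega)
      simp only [e1, e2]
      exact ⟨le_top, fun b _ a ha => Normal.conj_mem ‹N.Normal› a ha b⟩

end Helpers


section Fitting

variable {G : Type*} [Group G]

lemma aux_relIndex_sup_dvd (A : Subgroup G) [A.Normal] {B C : Subgroup G} (hBC : B ≤ C) :
    (A ⊔ B).relIndex (A ⊔ C) ∣ B.relIndex C := by
  set π := QuotientGroup.mk' A with hπ
  have hker : π.ker = A := QuotientGroup.ker_mk' A
  have h1 : comap π (map π B) = A ⊔ B := by rw [comap_map_eq, hker, sup_comm]
  have hA : map π A = ⊥ := (Subgroup.map_eq_bot_iff A).mpr (le_of_eq hker.symm)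
  have h2 : map π (A ⊔ C) = map π C := by rw [Subgroup.map_sup, hA, bot_sup_eq]
  have e1 : (A ⊔ B).relIndex (A ⊔ C) = (map π B).relIndex (map π (A ⊔ C)) := by
    rw [← relIndex_comap, h1]
  have e2 : (A ⊔ B).relIndex C = (map π B).relIndex (map π C) := by
    rw [← relIndex_comap, h1]
  rw [e1, h2, ← e2]
  exact relIndex_dvd_of_le_left C le_sup_right

lemma aux_normal_pgroup_le_sylow {p : ℕ} [Fact p.Prime] [Finite G] {O : Subgroup G} [O.Normal]
    (hO : IsPGroup p O) (P : Sylow p G) : O ≤ P := by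
  obtain ⟨Q, hQ⟩ := hO.exists_le_sylow
  obtain ⟨g, hg⟩ := MulAction.exists_smul_eq G Q P
  calc O = MulAut.conj g • O := (Normal.conj_smul_eq_self g O).symm
    _ ≤ MulAut.conj g • (Q : Subgroup G) := pointwise_smul_le_pointwise_smul_iff.mpr hQ
    _ = ((g • Q : Sylow p G) : Subgroup G) := Sylow.coe_subgroup_smul.symm
    _ = P := by rw [hg]

/-- Fitting's theorem for finite groups. -/
lemma aux_fitting [Finite G] (M N : Subgroup G) [M.Normal] [N.Normal]
    (hM : Group.IsNilpotent M) (hN : Group.IsNilpotent N) : Group.IsNilpotent ↥(M ⊔ N) := by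
  have key : ∀ (p : ℕ) (_hp : Fact p.Prime) (P : Sylow p ↥(M ⊔ N)),
      (P : Subgroup ↥(M ⊔ N)).Normal := by
    intro p hp P
    -- normal Sylow subgroups of M and N
    have hMtfae := ((isNilpotent_of_finite_tfae (G := ↥M)).out 0 3).mp hM
    have hNtfae := ((isNilpotent_of_finite_tfae (G := ↥N)).out 0 3).mp hN
    set Mp : Sylow p ↥M := default
    set Np : Sylow p ↥N := default
    have hMpn : (Mp : Subgroup ↥M).Normal := hMtfae p hp Mp
    have hNpn : (Np : Subgroup ↥N).Normal := hNtfae p hp Np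
    haveI : (Mp : Subgroup ↥M).Characteristic := Sylow.characteristic_of_normal Mp hMpn
    haveI : (Np : Subgroup ↥N).Characteristic := Sylow.characteristic_of_normal Np hNpn
    set Mp' : Subgroup G := (Mp : Subgroup ↥M).map M.subtype with hMp'def
    set Np' : Subgroup G := (Np : Subgroup ↥N).map N.subtype with hNp'def
    haveI hMp'n : Mp'.Normal := ConjAct.normal_of_characteristic_of_normal
    haveI hNp'n : Np'.Normal := ConjAct.normal_of_characteristic_of_normal
    have hMp'p : IsPGroup p Mp' := Mp.2.map M.subtype
    have hNp'p : IsPGroup p Np' := Np.2.map N.subtype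
    set O : Subgroup G := Mp' ⊔ Np' with hOdef
    haveI hOn : O.Normal := sup_normal _ _
    have hOp : IsPGroup p O := IsPGroup.to_sup_of_normal_right hMp'p hNp'p
    have hMp'M : Mp' ≤ M := map_subtype_le _
    have hNp'N : Np' ≤ N := map_subtype_le _
    have hOle : O ≤ M ⊔ N := sup_le (hMp'M.trans le_sup_left) (hNp'N.trans le_sup_right)
    set O' : Subgroup ↥(M ⊔ N) := O.subgroupOf (M ⊔ N) with hO'def
    haveI hO'n : O'.Normal := Subgroup.Normal.subgroupOf hOn _
    have hO'p : IsPGroup p O' := hOp.of_equiv (subgroupOfEquivOfLe hOle).symm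
    have hle : O' ≤ P := aux_normal_pgroup_le_sylow hO'p P
    -- the index of O' is coprime to p
    have hrel1 : O.relIndex (Mp' ⊔ N) ∣ Np'.relIndex N := aux_relIndex_sup_dvd Mp' hNp'N
    have hrel2 : (Mp' ⊔ N).relIndex (M ⊔ N) ∣ Mp'.relIndex M := by
      have := aux_relIndex_sup_dvd N hMp'M
      rwa [sup_comm N Mp', sup_comm N M] at this
    have hchain : O.relIndex (Mp' ⊔ N) * (Mp' ⊔ N).relIndex (M ⊔ N) = O.relIndex (M ⊔ N) :=
      relIndex_mul_relIndex _ _ _ (sup_le le_sup_left (hNp'N.trans le_sup_right))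
        (sup_le (hMp'M.trans le_sup_left) le_sup_right)
    have hcop1 : ¬ p ∣ Np'.relIndex N := by
      have : Np'.subgroupOf N = (Np : Subgroup ↥N) :=
        comap_map_eq_self_of_injective N.subtype_injective _
      show ¬ p ∣ (Np'.subgroupOf N).index
      rw [this]
      exact Np.not_dvd_index
    have hcop2 : ¬ p ∣ Mp'.relIndex M := by
      have : Mp'.subgroupOf M = (Mp : Subgroup ↥M) :=
        comap_map_eq_self_of_injective M.subtype_injective _
      show ¬ p ∣ (Mp'.subgroupOf M).index
      rw [this]
      exact Mp.not_dvd_index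
    have hcop : ¬ p ∣ O.relIndex (M ⊔ N) := by
      rw [← hchain]
      intro h
      rcases (Nat.Prime.dvd_mul hp.out).mp h with h' | h'
      · exact hcop1 (h'.trans hrel1)
      · exact hcop2 (h'.trans hrel2)
    -- O' has index coprime to p in M ⊔ N, hence P ≤ O'
    have hindex : ¬ p ∣ O'.index := hcop
    have hrelP : O'.relIndex P ∣ O'.index := relIndex_dvd_index_of_le hle
    have hrelPcard : O'.relIndex P ∣ Nat.card P := by
      exact (index_dvd_card _)
    obtain ⟨k, hk⟩ := IsPGroup.iff_card.mp P.2
    have hppow : O'.relIndex P = 1 := by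
      rw [hk] at hrelPcard
      obtain ⟨j, hj, hjeq⟩ := (Nat.dvd_prime_pow hp.out).mp hrelPcard
      rcases Nat.eq_zero_or_pos j with rfl | hj'
      · simpa using hjeq
      · exact absurd ((hjeq ▸ dvd_pow_self p (by omega : j ≠ 0)).trans hrelP) hindex
    have : (P : Subgroup ↥(M ⊔ N)) = O' := le_antisymm (relIndex_eq_one.mp hppow) hle
    rw [this]
    exact hO'n
  exact ((isNilpotent_of_finite_tfae (G := ↥(M ⊔ N))).out 3 0).mp key

end Fitting

section FinFitting
variable {G : Type*} [Group G] [Finite G]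

lemma aux_fitting_finset {ι : Type*} (s : Finset ι) (f : ι → Subgroup G)
    (hn : ∀ i, (f i).Normal) (hnil : ∀ i, Group.IsNilpotent (f i)) :
    (s.sup f).Normal ∧ Group.IsNilpotent ↥(s.sup f) := by
  classical
  induction s using Finset.induction with
  | empty => exact ⟨by simpa using inferInstanceAs (⊥ : Subgroup G).Normal,
      by simpa using inferInstanceAs (Group.IsNilpotent ↥(⊥ : Subgroup G))⟩
  | insert a s' hx ih =>
    obtain ⟨ihn, ihnil⟩ := ih
    rw [Finset.sup_insert]
    haveI := hn a
    haveI := ihn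
    exact ⟨sup_normal _ _, aux_fitting _ _ (hnil a) ihnil⟩

lemma aux_fitting_iSup {ι : Type*} [Finite ι] (f : ι → Subgroup G)
    (hn : ∀ i, (f i).Normal) (hnil : ∀ i, Group.IsNilpotent (f i)) :
    Group.IsNilpotent ↥(⨆ i, f i) := by
  haveI := Fintype.ofFinite ι
  rw [← Finset.sup_univ_eq_iSup]
  exact (aux_fitting_finset Finset.univ f hn hnil).2

end FinFitting

universe u

lemma aux_hard (n : ℕ) : ∀ (G : Type u) [Group G] [Finite G] (H : Subgroup G),
    Nat.card G ≤ n → Group.IsNilpotent H → Subnormal H →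
    Group.IsNilpotent ↥(Subgroup.normalClosure (H : Set G)) := by
  induction n with
  | zero =>
    intro G _ _ H hcard _ _
    have := Nat.card_pos (α := G)
    omega
  | succ n ih =>
    intro G _ _ H hcard hnil hsub
    obtain ⟨m, c, hc0, hcm, hnorm⟩ := hsub
    induction m generalizing c with
    | zero =>
      have hH : H = ⊤ := hc0.symm.trans hcm
      haveI : H.Normal := by rw [hH]; infer_instance
      rw [normalClosure_eq_self]
      exact hnil
    | succ m ihm =>
      have hKtop : NormalIn (c m) (c (m + 1)) := hnorm m (Nat.lt_succ_self m)
      rw [hcm] at hKtop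
      set K := c m with hK
      haveI hKnormal : K.Normal := ⟨fun a ha g => hKtop.2 g trivial a ha⟩
      by_cases htop : K = ⊤
      · exact ihm c hc0 htop (fun i hi => hnorm i (hi.trans (Nat.lt_succ_self _)))
      · have hmono : ∀ i, i ≤ m + 1 → c 0 ≤ c i := by
          intro i hi
          induction i with
          | zero => exact le_rfl
          | succ j ihj => exact (ihj (by omega)).trans (hnorm j (by omega)).1
        have hHK : H ≤ K := hc0 ▸ hmono m (by omega)
        have hcardK : Nat.card ↥K ≤ n := by
          have h1 : Nat.card ↥K < Nat.card ↥(⊤ : Subgroup G) :=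
            aux_card_lt (lt_top_iff_ne_top.mpr htop)
          rw [card_top] at h1; omega
        set H' : Subgroup ↥K := H.subgroupOf K with hH'def
        have hsub' : Subnormal H' := by
          refine ⟨m, fun i => (c (min i m)).subgroupOf K, ?_, ?_, ?_⟩
          · simp only [Nat.zero_min, hc0, hH'def]
          · simp only [min_self, ← hK, subgroupOf_self]
          · intro i hi
            have e1 : min i m = i := by omega
            have e2 : min (i + 1) m = i + 1 := by omega
            simp only [e1, e2]
            constructor
            · intro x hx
              exact (hnorm i (by omega)).1 hx
            · intro b hb a ha
              have := (hnorm i (by omega)).2 ↑b hb ↑a ha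
              simpa [mem_subgroupOf] using this
        have hnil' : Group.IsNilpotent H' := by
          haveI := hnil
          exact nilpotent_of_mulEquiv (subgroupOfEquivOfLe hHK).symm
        have hMnil := ih ↥K H' hcardK hnil' hsub'
        set M'' : Subgroup ↥K := Subgroup.normalClosure (H' : Set ↥K) with hM''def
        set M' : Subgroup G := M''.map K.subtype with hM'def
        have hM'le : M' ≤ K := map_subtype_le _
        have hM'nil : Group.IsNilpotent M' := by
          haveI := hMnil
          exact nilpotent_of_mulEquiv (equivMapOfInjective M'' K.subtype K.subtype_injective)
        have hHM' : H ≤ M' := by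
          intro x hx
          exact ⟨⟨x, hHK hx⟩, le_normalClosure (show (⟨x, hHK hx⟩ : ↥K) ∈ H' from hx), rfl⟩
        have hM'normK : ∀ k ∈ K, ∀ a ∈ M', k * a * k⁻¹ ∈ M' := by
          intro k hk a ha
          obtain ⟨a', ha', rfl⟩ := ha
          exact ⟨⟨k, hk⟩ * a' * ⟨k, hk⟩⁻¹,
            Subgroup.normalClosure_normal.conj_mem a' ha' ⟨k, hk⟩, rfl⟩
        set f : G → Subgroup G := fun g => MulAut.conj g • M' with hfdef
        have hfle : ∀ g, f g ≤ K := by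
          intro g
          exact (pointwise_smul_le_pointwise_smul_iff.mpr hM'le).trans
            (le_of_eq (Normal.conj_smul_eq_self g K))
        have hfnil : ∀ g, Group.IsNilpotent (f g) := by
          intro g
          haveI := hM'nil
          exact nilpotent_of_mulEquiv (equivSMul (MulAut.conj g) M')
        have hfnorm : ∀ g, ∀ k ∈ K, ∀ a ∈ f g, k * a * k⁻¹ ∈ f g := by
          intro g k hk a ha
          rw [show f g = MulAut.conj g • M' from rfl,
            mem_pointwise_smul_iff_inv_smul_mem] at ha ⊢
          have hk' : g⁻¹ * k * g ∈ K := by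
            have := hKnormal.conj_mem k hk g⁻¹
            simpa using this
          have hmain := hM'normK _ hk' _ ha
          have hx : (MulAut.conj g)⁻¹ • (k * a * k⁻¹) =
              (g⁻¹ * k * g) * ((MulAut.conj g)⁻¹ • a) * (g⁻¹ * k * g)⁻¹ := by
            simp only [MulAut.smul_def, MulAut.conj_inv_apply]
            group
          rw [hx]
          exact hmain
        set F : G → Subgroup ↥K := fun g => (f g).subgroupOf K with hFdef
        have hFnorm : ∀ g, (F g).Normal := by
          intro g
          constructor
          intro a ha k
          exact hfnorm g ↑k k.2 ↑a ha
        have hFnil : ∀ g, Group.IsNilpotent (F g) := by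
          intro g
          haveI := hfnil g
          exact nilpotent_of_mulEquiv (subgroupOfEquivOfLe (hfle g)).symm
        have hT := aux_fitting_iSup F hFnorm hFnil
        have hmapT : (⨆ g : G, F g).map K.subtype = ⨆ g : G, f g := by
          rw [Subgroup.map_iSup]
          refine iSup_congr fun g => ?_
          rw [show F g = (f g).subgroupOf K from rfl, subgroupOf_map_subtype,
            inf_eq_left.mpr (hfle g)]
        have hSnil : Group.IsNilpotent ↥(⨆ g : G, f g) := by
          haveI := hT
          rw [← hmapT]
          exact nilpotent_of_mulEquiv (equivMapOfInjective _ K.subtype K.subtype_injective)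
        haveI hSnormal : (⨆ g : G, f g).Normal := by
          constructor
          intro a ha x
          refine Subgroup.iSup_induction f (C := fun b => x * b * x⁻¹ ∈ ⨆ g : G, f g) ha
            ?_ (by simpa using (⨆ g : G, f g).one_mem) ?_
          · intro g b hb
            apply Subgroup.mem_iSup_of_mem (x * g)
            have hcomp : MulAut.conj x • (MulAut.conj g • M') = f (x * g) := by
              rw [smul_smul, ← map_mul]
            rw [show f (x * g) = MulAut.conj x • (MulAut.conj g • M') from hcomp.symm]
            have hb' : b ∈ MulAut.conj g • M' := hb
            simpa [MulAut.smul_def, MulAut.conj_apply] using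
              smul_mem_pointwise_smul b (MulAut.conj x) _ hb'
          · intro b c hb hc
            have : x * (b * c) * x⁻¹ = (x * b * x⁻¹) * (x * c * x⁻¹) := by group
            rw [this]; exact mul_mem hb hc
        have hfin : Subgroup.normalClosure (H : Set G) ≤ ⨆ g : G, f g := by
          apply normalClosure_le_normal
          intro x hx
          have h1 : f 1 = M' := by
            rw [show f 1 = MulAut.conj (1 : G) • M' from rfl, map_one, one_smul]
          exact le_iSup f 1 (h1 ▸ hHM' hx)
        exact aux_nilp_of_le hfin hSnil


/-- For a finite group `G`, a subgroup `H` is nilpotent and subnormal in `G`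
iff the normal closure of `H` in `G` is nilpotent. -/
theorem stmt8 {G : Type*} [Group G] [Finite G] (H : Subgroup G) :
    (Group.IsNilpotent H ∧ Subnormal H) ↔
      Group.IsNilpotent (Subgroup.normalClosure (H : Set G)) := by
  constructor
  · rintro ⟨h1, h2⟩
    exact aux_hard (Nat.card G) G H le_rfl h1 h2
  · intro hN
    exact ⟨aux_nilp_of_le le_normalClosure hN,
      aux_subnormal_of_le_nilpotent_normal le_normalClosure hN⟩
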